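/- Let d ≥ 1, let U be a d×d unitary matrix, and define the d²×d² matrices Ω = Σ_{i=1}^{d} |i⟩⟨i| ⊗ (U |i⟩⟨i| U†)^⊤, ρ₀ = (1/d) Σ_{i=1}^{d} |i⟩⟨i| ⊗ (U |i⟩⟨i| U†)^⊤, and ρ₁ = (1/d²) 1. Then Ω is an orthogonal projection (so 0 ≤ Ω ≤ 1), ρ₀ and ρ₁ are positive semidefinite with unit trace, and Tr(Ω ρ₀) = 1 while Tr(Ω ρ₁) = 1/d. Hence the test accepting on Ω has type I error probability 1 − Tr(Ω ρ₀) = 0 and type II error probability Tr(Ω ρ₁) = 1/d. -/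

import Mathlib

open Matrix Kronecker
open scoped ComplexOrder

private lemma kron_conjTranspose {m n : Type*} (A : Matrix m m ℂ) (B : Matrix n n ℂ) :
    (A ⊗ₖ B)ᴴ = Aᴴ ⊗ₖ Bᴴ := by
  ext ⟨i, j⟩ ⟨k, l⟩
  simp [conjTranspose_apply, kroneckerMap_apply, mul_comm]

private lemma smul_posSemidef {n : Type*} [Fintype n] (c : ℝ) (hc : 0 ≤ c)
    {M : Matrix n n ℂ} (hM : M.PosSemidef) : ((c : ℂ) • M).PosSemidef := by
  refine Matrix.PosSemidef.of_dotProduct_mulVec_nonneg ?_ ?_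
  · unfold Matrix.IsHermitian
    rw [conjTranspose_smul, hM.1]
    norm_num
  · intro x
    rw [smul_mulVec, dotProduct_smul]
    exact mul_nonneg (by exact_mod_cast hc) (hM.dotProduct_mulVec_nonneg x)

theorem asymmetric_discrimination_one_fixed (d : ℕ) (hd : 1 ≤ d)
    (U : Matrix (Fin d) (Fin d) ℂ) (hU : U ∈ Matrix.unitaryGroup (Fin d) ℂ)
    (Ω ρ₀ ρ₁ : Matrix (Fin d × Fin d) (Fin d × Fin d) ℂ)
    (hΩ : Ω = ∑ i : Fin d,
      (Matrix.single i i (1 : ℂ)) ⊗ₖ (U * Matrix.single i i (1 : ℂ) * Uᴴ)ᵀ)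
    (hρ₀ : ρ₀ = (1 / (d : ℂ)) • ∑ i : Fin d,
      (Matrix.single i i (1 : ℂ)) ⊗ₖ (U * Matrix.single i i (1 : ℂ) * Uᴴ)ᵀ)
    (hρ₁ : ρ₁ = (1 / (d : ℂ) ^ 2) • (1 : Matrix (Fin d × Fin d) (Fin d × Fin d) ℂ)) :
    Ω.IsHermitian ∧ Ω * Ω = Ω ∧
    Ω.PosSemidef ∧ ((1 : Matrix (Fin d × Fin d) (Fin d × Fin d) ℂ) - Ω).PosSemidef ∧
    ρ₀.PosSemidef ∧ ρ₀.trace = 1 ∧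
    ρ₁.PosSemidef ∧ ρ₁.trace = 1 ∧
    (Ω * ρ₀).trace = 1 ∧ (Ω * ρ₁).trace = 1 / (d : ℂ) ∧
    1 - (Ω * ρ₀).trace = 0 := by
  have hdC : (d : ℂ) ≠ 0 := Nat.cast_ne_zero.mpr (by omega)
  have hUU : Uᴴ * U = 1 := hU.1
  set P : Fin d → Matrix (Fin d) (Fin d) ℂ := fun i => Matrix.single i i (1 : ℂ) with hP
  set Q : Fin d → Matrix (Fin d) (Fin d) ℂ := fun i => U * P i * Uᴴ with hQ
  -- Hermiticity of pieces
  have hPh : ∀ i, (P i)ᴴ = P i := by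
    intro i; ext a b
    simp [hP, conjTranspose_apply, Matrix.single, and_comm]
  have hQh : ∀ i, (Q i)ᴴ = Q i := by
    intro i
    simp [hQ, conjTranspose_mul, hPh i, mul_assoc]
  have hQTh : ∀ i, ((Q i)ᵀ)ᴴ = (Q i)ᵀ := by
    intro i
    have : ((Q i)ᵀ)ᴴ = ((Q i)ᴴ)ᵀ := by
      ext a b; simp [conjTranspose_apply]
    rw [this, hQh i]
  -- Hermitian
  have hherm : Ω.IsHermitian := by
    rw [hΩ]
    unfold Matrix.IsHermitian
    rw [conjTranspose_sum]
    refine Finset.sum_congr rfl fun i _ => ?_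
    rw [kron_conjTranspose, hPh i, hQTh i]
  -- products
  have hPP : ∀ i j, P i * P j = if i = j then P i else 0 := by
    intro i j
    by_cases h : i = j
    · subst h; simp [hP]
    · rw [if_neg h]
      simp [hP, h]
  have hQQ : ∀ i j, Q i * Q j = if i = j then Q i else 0 := by
    intro i j
    have : Q i * Q j = U * (P i * P j) * Uᴴ := by
      simp only [hQ]
      calc U * P i * Uᴴ * (U * P j * Uᴴ) = U * P i * (Uᴴ * U) * P j * Uᴴ := by
            noncomm_ring
        _ = U * (P i * P j) * Uᴴ := by rw [hUU]; noncomm_ring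
    rw [this, hPP i j]
    by_cases h : i = j <;> simp [h] <;> rfl
  have hΩ' : Ω = ∑ i : Fin d, P i ⊗ₖ (Q i)ᵀ := hΩ
  have hterm : ∀ i j, (P i ⊗ₖ (Q i)ᵀ) * (P j ⊗ₖ (Q j)ᵀ) =
      if i = j then P i ⊗ₖ (Q i)ᵀ else 0 := by
    intro i j
    rw [← mul_kronecker_mul, hPP i j, ← transpose_mul, hQQ j i]
    by_cases h : i = j
    · subst h; simp
    · simp [h, Ne.symm h]
  have hidem : Ω * Ω = Ω := by
    rw [hΩ', Finset.sum_mul_sum]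
    refine Finset.sum_congr rfl fun i _ => ?_
    calc ∑ j, (P i ⊗ₖ (Q i)ᵀ) * (P j ⊗ₖ (Q j)ᵀ)
        = ∑ j, if i = j then P i ⊗ₖ (Q i)ᵀ else 0 :=
          Finset.sum_congr rfl fun j _ => hterm i j
      _ = P i ⊗ₖ (Q i)ᵀ := by simp
  -- traces
  have htrQ : ∀ i, (Q i).trace = 1 := by
    intro i
    rw [hQ]
    simp only
    rw [Matrix.trace_mul_cycle, hUU, Matrix.one_mul, hP]
    exact Matrix.trace_single_eq_same i (1 : ℂ)
  have htrΩ : Ω.trace = (d : ℂ) := by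
    have h1 : ∀ i : Fin d, (P i ⊗ₖ (Q i)ᵀ).trace = 1 := by
      intro i
      rw [trace_kronecker, trace_transpose, htrQ i, hP,
        Matrix.trace_single_eq_same, one_mul]
    rw [hΩ', trace_sum, Finset.sum_congr rfl fun i _ => h1 i]
    simp
  -- posSemidef
  have hpos : Ω.PosSemidef := by
    have := Matrix.posSemidef_conjTranspose_mul_self Ω
    rwa [hherm.eq, hidem] at this
  have hposc : ((1 : Matrix (Fin d × Fin d) (Fin d × Fin d) ℂ) - Ω).PosSemidef := by
    have hh : ((1 : Matrix (Fin d × Fin d) (Fin d × Fin d) ℂ) - Ω).IsHermitian :=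
      Matrix.isHermitian_one.sub hherm
    have hi : ((1 : Matrix (Fin d × Fin d) (Fin d × Fin d) ℂ) - Ω) *
        ((1 : Matrix (Fin d × Fin d) (Fin d × Fin d) ℂ) - Ω) = 1 - Ω := by
      rw [Matrix.sub_mul, Matrix.mul_sub, Matrix.mul_sub, hidem]
      simp
    have := Matrix.posSemidef_conjTranspose_mul_self
      ((1 : Matrix (Fin d × Fin d) (Fin d × Fin d) ℂ) - Ω)
    rwa [hh.eq, hi] at this
  have hρ₀Ω : ρ₀ = (1 / (d : ℂ)) • Ω := by rw [hρ₀, hΩ]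
  have hρ₀pos : ρ₀.PosSemidef := by
    rw [hρ₀Ω]
    have : ((1 : ℂ) / (d : ℂ)) = ((1 / (d : ℝ) : ℝ) : ℂ) := by push_cast; ring
    rw [this]
    exact smul_posSemidef _ (by positivity) hpos
  have hρ₀tr : ρ₀.trace = 1 := by
    rw [hρ₀Ω, trace_smul, htrΩ, smul_eq_mul]
    field_simp
  have hρ₁pos : ρ₁.PosSemidef := by
    rw [hρ₁]
    have : ((1 : ℂ) / (d : ℂ) ^ 2) = ((1 / (d : ℝ) ^ 2 : ℝ) : ℂ) := by push_cast; ring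
    rw [this]
    exact smul_posSemidef _ (by positivity) Matrix.PosSemidef.one
  have hρ₁tr : ρ₁.trace = 1 := by
    rw [hρ₁, trace_smul, trace_one, smul_eq_mul]
    simp [Fintype.card_prod]
    field_simp
  have hΩρ₀ : (Ω * ρ₀).trace = 1 := by
    rw [hρ₀Ω, Matrix.mul_smul, hidem, trace_smul, htrΩ, smul_eq_mul]
    field_simp
  have hΩρ₁ : (Ω * ρ₁).trace = 1 / (d : ℂ) := by
    rw [hρ₁, Matrix.mul_smul, Matrix.mul_one, trace_smul, htrΩ, smul_eq_mul]
    field_simp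
  exact ⟨hherm, hidem, hpos, hposc, hρ₀pos, hρ₀tr, hρ₁pos, hρ₁tr, hΩρ₀, hΩρ₁, by
    rw [hΩρ₀]; ring⟩
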